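/- Let $f : \mathbb{R}^d \to \mathbb{R}$ be twice continuously differentiable with $M$-Lipschitz Hessian, i.e., $\|\nabla^2 f(x) - \nabla^2 f(y)\| \leq M \|x - y\|$. Fix $x \in \mathbb{R}^d$, $c > 0$, and let $z$ be a random vector with $\mathbb{E}[z z^\top] = I_d$ and $s_1 = \mathbb{E}[\|z\|^4] < \infty$. Define the twicing estimator $g = \frac{4 f(x + (c/2) z) - 4 f(x)}{c} z - \frac{f(x + c z) - f(x)}{c} z$. Then the bias satisfies $\|\mathbb{E}[g] - \nabla f(x)\| \leq \frac{c^2}{4} M s_1$. -/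

import Mathlib

open MeasureTheory RealInnerProductSpace

lemma stmt9_coord_le_norm {d : ℕ} (w : EuclideanSpace ℝ (Fin d)) (i : Fin d) : |w i| ≤ ‖w‖ := by
  have h0 := EuclideanSpace.norm_eq w
  have h1 : ‖w‖^2 = ∑ j, ‖w j‖^2 := by
    rw [h0]; exact Real.sq_sqrt (Finset.sum_nonneg fun j _ => sq_nonneg _)
  have h2 : ‖w i‖^2 ≤ ∑ j, ‖w j‖^2 :=
    Finset.single_le_sum (f := fun j => ‖w j‖ ^ 2) (fun j _ => sq_nonneg _) (Finset.mem_univ i)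
  rw [← Real.norm_eq_abs]
  nlinarith [norm_nonneg w, norm_nonneg (w i)]

lemma stmt9_contdiff_grad {d : ℕ} (f : EuclideanSpace ℝ (Fin d) → ℝ) (hf : ContDiff ℝ 2 f) :
    ContDiff ℝ 1 (gradient f) := by
  have : gradient f = fun y => (InnerProductSpace.toDual ℝ (EuclideanSpace ℝ (Fin d))).symm (fderiv ℝ f y) := rfl
  rw [this]
  exact (InnerProductSpace.toDual ℝ _).symm.contDiff.comp (hf.fderiv_right (by norm_num))

lemma stmt9_lemA {d : ℕ} (f : EuclideanSpace ℝ (Fin d) → ℝ) (M : ℝ) (hM : 0 ≤ M)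
    (hf : ContDiff ℝ 2 f)
    (hlip : ∀ x y : EuclideanSpace ℝ (Fin d),
      ‖fderiv ℝ (gradient f) x - fderiv ℝ (gradient f) y‖ ≤ M * ‖x - y‖)
    (x v : EuclideanSpace ℝ (Fin d)) :
    ‖gradient f (x + v) - gradient f x - fderiv ℝ (gradient f) x v‖ ≤ M / 2 * ‖v‖ ^ 2 := by
  have hG : ContDiff ℝ 1 (gradient f) := stmt9_contdiff_grad f hf
  set G := gradient f with hGdef
  set ψ : ℝ → EuclideanSpace ℝ (Fin d) := fun t => G (x + t • v) - t • (fderiv ℝ G x v) with hψ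
  have hline : ∀ t : ℝ, HasDerivAt (fun s : ℝ => x + s • v) v t := by
    intro t
    simpa using ((hasDerivAt_id t).smul_const v).const_add x
  have hψ' : ∀ t : ℝ, HasDerivAt ψ (fderiv ℝ G (x + t • v) v - fderiv ℝ G x v) t := by
    intro t
    have h1 : HasDerivAt (fun s : ℝ => G (x + s • v)) (fderiv ℝ G (x + t • v) v) t :=
      by have h := (((hG.differentiable one_ne_zero) (x + t • v)).hasFDerivAt).comp_hasDerivAt t (hline t); exact h
    have h2 : HasDerivAt (fun s : ℝ => s • (fderiv ℝ G x v)) (fderiv ℝ G x v) t := by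
      simpa using (hasDerivAt_id t).smul_const (fderiv ℝ G x v)
    exact h1.sub h2
  have hcont : Continuous fun t : ℝ => fderiv ℝ G (x + t • v) v - fderiv ℝ G x v := by
    have h0 : Continuous (fderiv ℝ G) := hG.continuous_fderiv one_ne_zero
    fun_prop
  have key : ψ 1 - ψ 0 = ∫ t in (0:ℝ)..1, (fderiv ℝ G (x + t • v) v - fderiv ℝ G x v) :=
    (intervalIntegral.integral_eq_sub_of_hasDerivAt (fun t _ => hψ' t)
      (hcont.intervalIntegrable 0 1)).symm
  have hbound : ∀ t ∈ Set.Ioc (0:ℝ) 1, ‖fderiv ℝ G (x + t • v) v - fderiv ℝ G x v‖ ≤ (M * ‖v‖^2) * t := by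
    intro t ht
    have : ‖fderiv ℝ G (x + t • v) v - fderiv ℝ G x v‖ ≤ ‖fderiv ℝ G (x + t • v) - fderiv ℝ G x‖ * ‖v‖ := by
      rw [← ContinuousLinearMap.sub_apply]
      exact (fderiv ℝ G (x + t • v) - fderiv ℝ G x).le_opNorm v
    refine this.trans ?_
    have h2 := hlip (x + t • v) x
    simp only [add_sub_cancel_left] at h2
    have h3 : ‖t • v‖ = t * ‖v‖ := by
      rw [norm_smul, Real.norm_eq_abs, abs_of_pos ht.1]
    calc ‖fderiv ℝ G (x + t • v) - fderiv ℝ G x‖ * ‖v‖ ≤ (M * (t * ‖v‖)) * ‖v‖ := by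
          apply mul_le_mul_of_nonneg_right _ (norm_nonneg v)
          rw [← h3]; exact h2
      _ = (M * ‖v‖^2) * t := by ring
  have hnorm : ‖ψ 1 - ψ 0‖ ≤ M / 2 * ‖v‖^2 := by
    rw [key]
    have hae : ∀ᵐ t ∂(volume.restrict (Set.uIoc (0:ℝ) 1)),
        ‖fderiv ℝ G (x + t • v) v - fderiv ℝ G x v‖ ≤ (M * ‖v‖^2) * t := by
      rw [MeasureTheory.ae_restrict_iff' measurableSet_uIoc]
      filter_upwards with t ht
      rw [Set.uIoc_of_le (by norm_num : (0:ℝ) ≤ 1)] at ht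
      exact hbound t ht
    have hint : IntervalIntegrable (fun t => (M * ‖v‖^2) * t) volume 0 1 :=
      (continuous_const.mul continuous_id).intervalIntegrable 0 1
    refine (intervalIntegral.norm_integral_le_abs_of_norm_le hae hint).trans ?_
    rw [intervalIntegral.integral_const_mul, integral_id]
    rw [abs_of_nonneg]
    · ring_nf; nlinarith [sq_nonneg ‖v‖]
    · positivity
  have : ψ 1 - ψ 0 = G (x + v) - G x - fderiv ℝ G x v := by
    simp [hψ]
    abel
  rwa [this] at hnorm

lemma stmt9_lemB {d : ℕ} (f : EuclideanSpace ℝ (Fin d) → ℝ) (M : ℝ) (hM : 0 ≤ M)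
    (hf : ContDiff ℝ 2 f)
    (hlip : ∀ x y : EuclideanSpace ℝ (Fin d),
      ‖fderiv ℝ (gradient f) x - fderiv ℝ (gradient f) y‖ ≤ M * ‖x - y‖)
    (x v : EuclideanSpace ℝ (Fin d)) :
    |f (x + v) - f x - ⟪gradient f x, v⟫ - 1/2 * ⟪fderiv ℝ (gradient f) x v, v⟫|
      ≤ M / 6 * ‖v‖ ^ 3 := by
  have lemA := stmt9_lemA f M hM hf hlip
  have hG : ContDiff ℝ 1 (gradient f) := stmt9_contdiff_grad f hf
  set G := gradient f with hGdef
  have hfd : ∀ y : EuclideanSpace ℝ (Fin d), HasFDerivAt f (InnerProductSpace.toDual ℝ _ (G y)) y := by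
    intro y
    exact (((hf.differentiable (by norm_num)) y).hasGradientAt).hasFDerivAt
  set φ : ℝ → ℝ := fun t => f (x + t • v) - t * ⟪G x, v⟫ - t^2/2 * ⟪fderiv ℝ G x v, v⟫ with hφ
  have hline : ∀ t : ℝ, HasDerivAt (fun s : ℝ => x + s • v) v t := by
    intro t
    simpa using ((hasDerivAt_id t).smul_const v).const_add x
  have hφ' : ∀ t : ℝ, HasDerivAt φ
      (⟪G (x + t • v), v⟫ - ⟪G x, v⟫ - t * ⟪fderiv ℝ G x v, v⟫) t := by
    intro t
    have h1 : HasDerivAt (fun s : ℝ => f (x + s • v)) (⟪G (x + t • v), v⟫) t := by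
      have := (hfd (x + t • v)).comp_hasDerivAt t (hline t)
      simp only [InnerProductSpace.toDual_apply_apply] at this
      exact this
    have h2 : HasDerivAt (fun s : ℝ => s * ⟪G x, v⟫) (⟪G x, v⟫) t := by
      simpa using (hasDerivAt_id t).mul_const (⟪G x, v⟫)
    have h3 : HasDerivAt (fun s : ℝ => s^2/2 * ⟪fderiv ℝ G x v, v⟫) (t * ⟪fderiv ℝ G x v, v⟫) t := by
      have : HasDerivAt (fun s : ℝ => s^2/2) t t := by
        have := ((hasDerivAt_pow 2 t).div_const 2)
        simpa using this
      simpa using this.mul_const (⟪fderiv ℝ G x v, v⟫)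
    exact (h1.sub h2).sub h3
  have hbound : ∀ t ∈ Set.Ioc (0:ℝ) 1,
      ‖⟪G (x + t • v), v⟫ - ⟪G x, v⟫ - t * ⟪fderiv ℝ G x v, v⟫‖ ≤ (M / 2 * ‖v‖^3) * t^2 := by
    intro t ht
    have heq : ⟪G (x + t • v), v⟫ - ⟪G x, v⟫ - t * ⟪fderiv ℝ G x v, v⟫
        = ⟪G (x + t • v) - G x - fderiv ℝ G x (t • v), v⟫ := by
      rw [(fderiv ℝ G x).map_smul]
      simp [inner_sub_left, inner_smul_left]
    rw [heq, Real.norm_eq_abs]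
    refine (abs_real_inner_le_norm _ _).trans ?_
    have := lemA x (t • v)
    have h3 : ‖t • v‖ = t * ‖v‖ := by
      rw [norm_smul, Real.norm_eq_abs, abs_of_pos ht.1]
    calc ‖G (x + t • v) - G x - fderiv ℝ G x (t • v)‖ * ‖v‖
        ≤ (M / 2 * ‖t • v‖^2) * ‖v‖ := mul_le_mul_of_nonneg_right this (norm_nonneg v)
      _ = (M / 2 * ‖v‖^3) * t^2 := by rw [h3]; ring
  have hcont : Continuous fun t : ℝ => ⟪G (x + t • v), v⟫ - ⟪G x, v⟫ - t * ⟪fderiv ℝ G x v, v⟫ := by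
    have h0 : Continuous G := hG.continuous
    have h1 : Continuous fun t : ℝ => G (x + t • v) :=
      h0.comp (by fun_prop)
    exact ((continuous_inner.comp (h1.prodMk continuous_const)).sub continuous_const).sub
      (continuous_id.mul continuous_const)
  have key : φ 1 - φ 0 = ∫ t in (0:ℝ)..1, (⟪G (x + t • v), v⟫ - ⟪G x, v⟫ - t * ⟪fderiv ℝ G x v, v⟫) :=
    (intervalIntegral.integral_eq_sub_of_hasDerivAt (fun t _ => hφ' t)
      (hcont.intervalIntegrable 0 1)).symm
  have hnorm : |φ 1 - φ 0| ≤ M / 6 * ‖v‖^3 := by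
    rw [← Real.norm_eq_abs, key]
    have hae : ∀ᵐ t ∂(volume.restrict (Set.uIoc (0:ℝ) 1)),
        ‖⟪G (x + t • v), v⟫ - ⟪G x, v⟫ - t * ⟪fderiv ℝ G x v, v⟫‖ ≤ (M / 2 * ‖v‖^3) * t^2 := by
      rw [MeasureTheory.ae_restrict_iff' measurableSet_uIoc]
      filter_upwards with t ht
      rw [Set.uIoc_of_le (by norm_num : (0:ℝ) ≤ 1)] at ht
      exact hbound t ht
    have hint : IntervalIntegrable (fun t : ℝ => (M / 2 * ‖v‖^3) * t^2) volume 0 1 :=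
      (continuous_const.mul (continuous_pow 2)).intervalIntegrable 0 1
    refine (intervalIntegral.norm_integral_le_abs_of_norm_le hae hint).trans ?_
    rw [intervalIntegral.integral_const_mul, integral_pow]
    rw [abs_of_nonneg (by positivity)]
    ring_nf
    nlinarith [pow_nonneg (norm_nonneg v) 3]
  have hφval : φ 1 - φ 0 = f (x + v) - f x - ⟪G x, v⟫ - 1/2 * ⟪fderiv ℝ G x v, v⟫ := by
    simp [hφ]
    ring_nf
  rwa [hφval] at hnorm


lemma stmt9_main_int {d : ℕ} {Ω : Type*} [MeasurableSpace Ω] (μ : Measure Ω) [IsProbabilityMeasure μ]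
    (G : EuclideanSpace ℝ (Fin d)) (z : Ω → EuclideanSpace ℝ (Fin d))
    (hdom : Integrable (fun ω => 1 + ‖z ω‖^4) μ)
    (hmeas : AEStronglyMeasurable (fun ω => (⟪G, z ω⟫ : ℝ) • z ω) μ) :
    Integrable (fun ω => (⟪G, z ω⟫ : ℝ) • z ω) μ := by
  have hsq_le : ∀ w : EuclideanSpace ℝ (Fin d), ‖w‖^2 ≤ 1 + ‖w‖^4 := by
    intro w; nlinarith [sq_nonneg (‖w‖^2 - 1), sq_nonneg ‖w‖]
  refine (hdom.const_mul ‖G‖).mono' hmeas ?_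
  filter_upwards with ω
  rw [norm_smul, Real.norm_eq_abs]
  calc |(⟪G, z ω⟫ : ℝ)| * ‖z ω‖ ≤ (‖G‖ * ‖z ω‖) * ‖z ω‖ :=
        mul_le_mul_of_nonneg_right (abs_real_inner_le_norm _ _) (norm_nonneg _)
    _ = ‖G‖ * ‖z ω‖^2 := by ring
    _ ≤ ‖G‖ * (1 + ‖z ω‖^4) := mul_le_mul_of_nonneg_left (hsq_le (z ω)) (norm_nonneg _)

lemma stmt9_main_eq {d : ℕ} {Ω : Type*} [MeasurableSpace Ω] (μ : Measure Ω) [IsProbabilityMeasure μ]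
    (G : EuclideanSpace ℝ (Fin d)) (z : Ω → EuclideanSpace ℝ (Fin d))
    (hzij_int : ∀ i j : Fin d, Integrable (fun ω => z ω i * z ω j) μ)
    (hsecond : ∀ i j : Fin d, ∫ ω, z ω i * z ω j ∂μ = if i = j then 1 else 0)
    (hmain_int : Integrable (fun ω => (⟪G, z ω⟫ : ℝ) • z ω) μ) :
    (∫ ω, (⟪G, z ω⟫ : ℝ) • z ω ∂μ) = G := by
  ext i
  have hproj := (EuclideanSpace.proj (𝕜 := ℝ) i).integral_comp_comm hmain_int
  have hlhs : (∫ ω, (⟪G, z ω⟫ : ℝ) • z ω ∂μ) i = ∫ ω, ((⟪G, z ω⟫ : ℝ) • z ω) i ∂μ :=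
    hproj.symm
  rw [hlhs]
  have hterm : ∀ ω, ((⟪G, z ω⟫ : ℝ) • z ω) i = ∑ j, G j * (z ω j * z ω i) := by
    intro ω
    simp only [PiLp.smul_apply, smul_eq_mul, PiLp.inner_apply, RCLike.inner_apply,
      conj_trivial, Finset.sum_mul]
    congr 1
    ext j
    ring
  rw [integral_congr_ae (Filter.Eventually.of_forall hterm)]
  rw [integral_finset_sum _ (fun j _ => (hzij_int j i).const_mul (G j))]
  have h2 : ∀ j, (∫ ω, G j * (z ω j * z ω i) ∂μ) = G j * (if j = i then 1 else 0) := by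
    intro j
    rw [MeasureTheory.integral_const_mul, hsecond j i]
  simp only [h2, mul_ite, mul_one, mul_zero]
  simp

theorem stmt_9 {d : ℕ} {Ω : Type*} [MeasurableSpace Ω] (μ : Measure Ω)
    [IsProbabilityMeasure μ]
    (f : EuclideanSpace ℝ (Fin d) → ℝ) (M : ℝ) (hM : 0 ≤ M)
    (hf : ContDiff ℝ 2 f)
    (hlip : ∀ x y : EuclideanSpace ℝ (Fin d),
      ‖fderiv ℝ (gradient f) x - fderiv ℝ (gradient f) y‖ ≤ M * ‖x - y‖)
    (x : EuclideanSpace ℝ (Fin d)) (c : ℝ) (hc : 0 < c)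
    (z : Ω → EuclideanSpace ℝ (Fin d)) (hzmeas : Measurable z)
    (hsecond : ∀ i j : Fin d, ∫ ω, z ω i * z ω j ∂μ = if i = j then 1 else 0)
    (hs1 : Integrable (fun ω => ‖z ω‖ ^ 4) μ)
    (g : Ω → EuclideanSpace ℝ (Fin d))
    (hg : ∀ ω, g ω = ((4 * f (x + (c / 2) • z ω) - 4 * f x) / c) • z ω -
      ((f (x + c • z ω) - f x) / c) • z ω) :
    ‖(∫ ω, g ω ∂μ) - gradient f x‖ ≤ c ^ 2 / 4 * M * ∫ ω, ‖z ω‖ ^ 4 ∂μ := by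
  classical
  have hB := stmt9_lemB f M hM hf hlip
  -- pointwise bound on the remainder
  have hrb : ∀ ω, ‖g ω - (⟪gradient f x, z ω⟫ : ℝ) • z ω‖ ≤ c^2/4 * M * ‖z ω‖^4 := by
    intro ω
    set w := z ω with hw
    set I := (⟪gradient f x, w⟫ : ℝ) with hI
    set Q := (⟪fderiv ℝ (gradient f) x w, w⟫ : ℝ) with hQ
    have h1 := hB x ((c/2) • w)
    have h2 := hB x (c • w)
    have hsc : ∀ a : ℝ, 0 < a → (⟪gradient f x, a • w⟫ : ℝ) = a * I ∧
        (⟪fderiv ℝ (gradient f) x (a • w), a • w⟫ : ℝ) = a * (a * Q) ∧ ‖a • w‖ = a * ‖w‖ := by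
      intro a ha
      refine ⟨real_inner_smul_right _ _ _, ?_, by rw [norm_smul, Real.norm_eq_abs, abs_of_pos ha]⟩
      rw [(fderiv ℝ (gradient f) x).map_smul, real_inner_smul_left, real_inner_smul_right]
    obtain ⟨e1, e2, e3⟩ := hsc (c/2) (by positivity)
    obtain ⟨f1, f2, f3⟩ := hsc c hc
    rw [e1, e2, e3] at h1
    rw [f1, f2, f3] at h2
    have hgw : g ω - I • w = ((4 * f (x + (c/2) • w) - 4 * f x) / c - (f (x + c • w) - f x) / c - I) • w := by
      rw [hg ω, sub_smul, sub_smul]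
    rw [hgw, norm_smul, Real.norm_eq_abs]
    have hkey : |(4 * f (x + (c/2) • w) - 4 * f x) / c - (f (x + c • w) - f x) / c - I|
        ≤ c^2/4 * M * ‖w‖^3 := by
      have heq : (4 * f (x + (c/2) • w) - 4 * f x) / c - (f (x + c • w) - f x) / c - I
          = (4 * (f (x + (c/2) • w) - f x - (c/2) * I - 1/2 * ((c/2) * ((c/2) * Q)))
            - (f (x + c • w) - f x - c * I - 1/2 * (c * (c * Q)))) / c := by
        field_simp
        ring
      rw [heq, abs_div, abs_of_pos hc, div_le_iff₀ hc]
      refine (abs_sub _ _).trans ?_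
      rw [abs_mul, abs_of_nonneg (by norm_num : (0:ℝ) ≤ 4)]
      have hb1 : M / 6 * (c / 2 * ‖w‖) ^ 3 = M * c^3 * ‖w‖^3 / 48 := by ring
      have hb2 : M / 6 * (c * ‖w‖) ^ 3 = M * c^3 * ‖w‖^3 / 6 := by ring
      rw [hb1] at h1; rw [hb2] at h2
      nlinarith [h1, h2]
    calc |(4 * f (x + (c/2) • w) - 4 * f x) / c - (f (x + c • w) - f x) / c - I| * ‖w‖
        ≤ (c^2/4 * M * ‖w‖^3) * ‖w‖ := mul_le_mul_of_nonneg_right hkey (norm_nonneg w)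
      _ = c^2/4 * M * ‖w‖^4 := by ring
  -- measurability
  have hcoordmeas : ∀ i : Fin d, Measurable fun ω => z ω i := fun i =>
    ((EuclideanSpace.proj (𝕜 := ℝ) i).continuous.measurable).comp hzmeas
  have hfc : Continuous f := hf.continuous
  have hmain_meas : AEStronglyMeasurable (fun ω => (⟪gradient f x, z ω⟫ : ℝ) • z ω) μ := by
    have hcm : Continuous fun w : EuclideanSpace ℝ (Fin d) => (⟪gradient f x, w⟫ : ℝ) • w :=
      by fun_prop
    exact (hcm.measurable.comp hzmeas).aestronglyMeasurable
  have hg_meas : AEStronglyMeasurable g μ := by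
    have hgeq : g = (fun w : EuclideanSpace ℝ (Fin d) =>
        ((4 * f (x + (c / 2) • w) - 4 * f x) / c) • w - ((f (x + c • w) - f x) / c) • w) ∘ z := by
      funext ω; exact hg ω
    have hcw : Continuous fun w : EuclideanSpace ℝ (Fin d) =>
        ((4 * f (x + (c / 2) • w) - 4 * f x) / c) • w - ((f (x + c • w) - f x) / c) • w := by
      fun_prop
    rw [hgeq]
    exact (hcw.measurable.comp hzmeas).aestronglyMeasurable
  have hr_meas : AEStronglyMeasurable (fun ω => g ω - (⟪gradient f x, z ω⟫ : ℝ) • z ω) μ :=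
    hg_meas.sub hmain_meas
  -- integrability
  have hdom : Integrable (fun ω => 1 + ‖z ω‖^4) μ := (integrable_const 1).add hs1
  have hsq_le : ∀ w : EuclideanSpace ℝ (Fin d), ‖w‖^2 ≤ 1 + ‖w‖^4 := by
    intro w; nlinarith [sq_nonneg (‖w‖^2 - 1), sq_nonneg ‖w‖]
  have hmain_int : Integrable (fun ω => (⟪gradient f x, z ω⟫ : ℝ) • z ω) μ :=
    stmt9_main_int μ _ z hdom hmain_meas
  have hr_int : Integrable (fun ω => g ω - (⟪gradient f x, z ω⟫ : ℝ) • z ω) μ := by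
    refine (hs1.const_mul (c^2/4 * M)).mono' hr_meas ?_
    filter_upwards with ω
    exact hrb ω
  have hg_int : Integrable g μ := by
    have hmr : g = fun ω => (⟪gradient f x, z ω⟫ : ℝ) • z ω +
        (g ω - (⟪gradient f x, z ω⟫ : ℝ) • z ω) := by
      funext ω; simp
    rw [hmr]; exact hmain_int.add hr_int
  have hzij_int : ∀ i j : Fin d, Integrable (fun ω => z ω i * z ω j) μ := by
    intro i j
    refine hdom.mono' (((hcoordmeas i).mul (hcoordmeas j)).aestronglyMeasurable) ?_
    filter_upwards with ω
    rw [Real.norm_eq_abs, abs_mul]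
    calc |z ω i| * |z ω j| ≤ ‖z ω‖ * ‖z ω‖ :=
          mul_le_mul (stmt9_coord_le_norm _ _) (stmt9_coord_le_norm _ _) (abs_nonneg _) (norm_nonneg _)
      _ = ‖z ω‖^2 := by ring
      _ ≤ 1 + ‖z ω‖^4 := hsq_le (z ω)
  have hmain_eq : (∫ ω, (⟪gradient f x, z ω⟫ : ℝ) • z ω ∂μ) = gradient f x :=
    stmt9_main_eq μ _ z hzij_int hsecond hmain_int
  -- conclude
  have hsplit : (∫ ω, (g ω - (⟪gradient f x, z ω⟫ : ℝ) • z ω) ∂μ)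
      = (∫ ω, g ω ∂μ) - gradient f x := by
    rw [integral_sub hg_int hmain_int, hmain_eq]
  rw [← hsplit]
  have hfin := norm_integral_le_of_norm_le (hs1.const_mul (c^2/4 * M))
    (Filter.Eventually.of_forall hrb)
  refine hfin.trans ?_
  rw [MeasureTheory.integral_const_mul]
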